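/- For any integer m > 1, there exist infinitely many positive integers k such that k·(m-1)·m^n + 1 is composite for every positive integer n. -/

import Mathlib

namespace Stmt15


/-- `m^i - 1 ∣ m^e - 1` when `i ∣ e`. -/
lemma pow1 (m : ℤ) {i e : ℕ} (h : i ∣ e) : (m ^ i - 1) ∣ (m ^ e - 1) := by
  obtain ⟨c, rfl⟩ := h
  have := sub_dvd_pow_sub_pow (m ^ i) 1 c
  simpa [pow_mul] using this

lemma dvd_pow_gcd (m : ℤ) (p a b : ℕ) (hp : p.Prime) (h1 : (p : ℤ) ∣ m ^ a - 1)
    (h2 : (p : ℤ) ∣ m ^ b - 1) : (p : ℤ) ∣ m ^ (Nat.gcd a b) - 1 := by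
  haveI : Fact p.Prime := ⟨hp⟩
  have c1 : ((m : ZMod p)) ^ a = 1 := by
    have := (ZMod.intCast_zmod_eq_zero_iff_dvd _ p).mpr h1
    push_cast at this
    exact sub_eq_zero.mp this
  have c2 : ((m : ZMod p)) ^ b = 1 := by
    have := (ZMod.intCast_zmod_eq_zero_iff_dvd _ p).mpr h2
    push_cast at this
    exact sub_eq_zero.mp this
  have hdvd := Nat.dvd_gcd (orderOf_dvd_of_pow_eq_one c1) (orderOf_dvd_of_pow_eq_one c2)
  have c3 : ((m : ZMod p)) ^ (Nat.gcd a b) = 1 := orderOf_dvd_iff_pow_eq_one.mp hdvd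
  rw [← ZMod.intCast_zmod_eq_zero_iff_dvd]
  push_cast
  rw [c3]
  ring

lemma T1 {y d : ℤ} (h1 : d ∣ y ^ 2 + y + 1) (h2 : d ∣ y - 1) : d ∣ 3 := by
  have h : (3 : ℤ) = (y ^ 2 + y + 1) - (y + 2) * (y - 1) := by ring
  rw [h]; exact dvd_sub h1 (h2.mul_left _)

lemma T2 {y d : ℤ} (h1 : d ∣ y ^ 2 + 1) (h2 : d ∣ y ^ 2 - 1) : d ∣ 2 := by
  have h : (2 : ℤ) = (y ^ 2 + 1) - (y ^ 2 - 1) := by ring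
  rw [h]; exact dvd_sub h1 h2

lemma T3 {y d : ℤ} (h1 : d ∣ y ^ 2 - y + 1) (h2 : d ∣ y ^ 3 - 1) : d ∣ 2 := by
  have h : (2 : ℤ) = (y + 1) * (y ^ 2 - y + 1) - (y ^ 3 - 1) := by ring
  rw [h]; exact dvd_sub (h1.mul_left _) h2

lemma T4 {y d : ℤ} (h1 : d ∣ y ^ 2 - y + 1) (h2 : d ∣ y ^ 2 - 1) : d ∣ 3 := by
  have h : (3 : ℤ) = (y + 2) * (y ^ 2 - y + 1) - (y + 1) * (y ^ 2 - 1) := by ring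
  rw [h]; exact dvd_sub (h1.mul_left _) (h2.mul_left _)

lemma no23 {d : ℕ} (h2 : ¬ 2 ∣ d) (h3 : ¬ 3 ∣ d) {p : ℕ} (hp : p.Prime) (hpd : p ∣ d)
    (h : (p : ℤ) ∣ 2 ∨ (p : ℤ) ∣ 3) : False := by
  rcases h with h | h
  · have hh : p ∣ 2 := by exact_mod_cast h
    rw [(Nat.prime_dvd_prime_iff_eq hp Nat.prime_two).mp hh] at hpd
    exact h2 hpd
  · have hh : p ∣ 3 := by exact_mod_cast h
    rw [(Nat.prime_dvd_prime_iff_eq hp Nat.prime_three).mp hh] at hpd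
    exact h3 hpd

-- shape lemmas
lemma sh_odd6 (y : ℤ) : ¬ (2 : ℤ) ∣ y ^ 2 - y + 1 := by
  intro h
  have h' : ((y ^ 2 - y + 1 : ℤ) : ZMod 2) = 0 :=
    (ZMod.intCast_zmod_eq_zero_iff_dvd _ 2).mpr (by exact_mod_cast h)
  push_cast at h'
  revert h'
  generalize (y : ZMod 2) = z
  revert z
  decide

lemma sh_nine6 (y : ℤ) : ¬ (9 : ℤ) ∣ y ^ 2 - y + 1 := by
  intro h
  have h' : ((y ^ 2 - y + 1 : ℤ) : ZMod 9) = 0 :=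
    (ZMod.intCast_zmod_eq_zero_iff_dvd _ 9).mpr (by exact_mod_cast h)
  push_cast at h'
  revert h'
  generalize (y : ZMod 9) = z
  revert z
  decide

lemma sh_odd3 (y : ℤ) : ¬ (2 : ℤ) ∣ y ^ 2 + y + 1 := by
  intro h
  have h' : ((y ^ 2 + y + 1 : ℤ) : ZMod 2) = 0 :=
    (ZMod.intCast_zmod_eq_zero_iff_dvd _ 2).mpr (by exact_mod_cast h)
  push_cast at h'
  revert h'
  generalize (y : ZMod 2) = z
  revert z
  decide

lemma sh_nine3 (y : ℤ) : ¬ (9 : ℤ) ∣ y ^ 2 + y + 1 := by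
  intro h
  have h' : ((y ^ 2 + y + 1 : ℤ) : ZMod 9) = 0 :=
    (ZMod.intCast_zmod_eq_zero_iff_dvd _ 9).mpr (by exact_mod_cast h)
  push_cast at h'
  revert h'
  generalize (y : ZMod 9) = z
  revert z
  decide

lemma sh_four4 (y : ℤ) : ¬ (4 : ℤ) ∣ y ^ 2 + 1 := by
  intro h
  have h' : ((y ^ 2 + 1 : ℤ) : ZMod 4) = 0 :=
    (ZMod.intCast_zmod_eq_zero_iff_dvd _ 4).mpr (by exact_mod_cast h)
  push_cast at h'
  revert h'
  generalize (y : ZMod 4) = z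
  revert z
  decide

lemma sh_nine4 (y : ℤ) : ¬ (9 : ℤ) ∣ y ^ 2 + 1 := by
  intro h
  have h' : ((y ^ 2 + 1 : ℤ) : ZMod 9) = 0 :=
    (ZMod.intCast_zmod_eq_zero_iff_dvd _ 9).mpr (by exact_mod_cast h)
  push_cast at h'
  revert h'
  generalize (y : ZMod 9) = z
  revert z
  decide



/-- strip all factors of 2 and 3 -/
def DD (F : ℤ) : ℕ := ordCompl[3] (ordCompl[2] F.toNat)

lemma DD_spec (F : ℤ) (h7 : 7 ≤ F) (h4 : ¬ (4 : ℤ) ∣ F) (h9 : ¬ (9 : ℤ) ∣ F) :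
    1 < DD F ∧ ¬ 2 ∣ DD F ∧ ¬ 3 ∣ DD F ∧ (DD F : ℤ) ∣ F := by
  set n : ℕ := F.toNat with hn
  have hFn : (n : ℤ) = F := Int.toNat_of_nonneg (by linarith)
  have hn7 : 7 ≤ n := by omega
  have hn0 : n ≠ 0 := by omega
  set n1 : ℕ := ordCompl[2] n with hn1
  have hn1dvd : n1 ∣ n := Nat.ordCompl_dvd n 2
  have hn1pos : 0 < n1 := Nat.ordCompl_pos 2 hn0
  have hn1ne : n1 ≠ 0 := hn1pos.ne'
  have hD : DD F = ordCompl[3] n1 := rfl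
  have hDdvd1 : DD F ∣ n1 := by rw [hD]; exact Nat.ordCompl_dvd n1 3
  have hDdvdn : DD F ∣ n := hDdvd1.trans hn1dvd
  have h2D : ¬ 2 ∣ DD F := fun h =>
    Nat.not_dvd_ordCompl Nat.prime_two hn0 (h.trans hDdvd1)
  have h3D : ¬ 3 ∣ DD F := by
    rw [hD]; exact Nat.not_dvd_ordCompl Nat.prime_three hn1ne
  have hDF : (DD F : ℤ) ∣ F := by
    rw [← hFn]; exact_mod_cast hDdvdn
  refine ⟨?_, h2D, h3D, hDF⟩
  -- size
  have hv2 : n.factorization 2 ≤ 1 := by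
    by_contra h
    push_neg at h
    have h22 : 2 ^ 2 ∣ n := (Nat.Prime.pow_dvd_iff_le_factorization Nat.prime_two hn0).mpr h
    have h4n : (4 : ℕ) ∣ n := by norm_num at h22; exact h22
    exact h4 (by rw [← hFn]; exact_mod_cast h4n)
  have hv3 : n1.factorization 3 ≤ 1 := by
    by_contra h
    push_neg at h
    have h33 : 3 ^ 2 ∣ n1 := (Nat.Prime.pow_dvd_iff_le_factorization Nat.prime_three hn1ne).mpr h
    have h9n1 : (9 : ℕ) ∣ n1 := by norm_num at h33; exact h33
    exact h9 (by rw [← hFn]; exact_mod_cast h9n1.trans hn1dvd)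
  by_contra hle
  push_neg at hle
  have hDpos : 0 < DD F := by rw [hD]; exact Nat.ordCompl_pos 3 hn1ne
  have hDD1 : DD F = 1 := by omega
  have e1 : n1 = 3 ^ (n1.factorization 3) * DD F := by
    rw [hD]; exact (Nat.ordProj_mul_ordCompl_eq_self n1 3).symm
  have e2 : n = 2 ^ (n.factorization 2) * n1 := by
    rw [hn1]; exact (Nat.ordProj_mul_ordCompl_eq_self n 2).symm
  have hb1 : (3:ℕ) ^ (n1.factorization 3) ≤ 3 ^ 1 := Nat.pow_le_pow_right (by norm_num) hv3
  have hb2 : (2:ℕ) ^ (n.factorization 2) ≤ 2 ^ 1 := Nat.pow_le_pow_right (by norm_num) hv2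
  have hn1le : n1 ≤ 3 := by
    rw [e1, hDD1]; simpa using hb1
  have : n ≤ 6 := by
    calc n = 2 ^ (n.factorization 2) * n1 := e2
      _ ≤ 2 * n1 := Nat.mul_le_mul (by simpa using hb2) le_rfl
      _ ≤ 2 * 3 := by omega
      _ = 6 := by norm_num
  omega



lemma listCRT (t : ℕ × ℕ × ℕ → ℕ) :
    ∀ (L : List (ℕ × ℕ × ℕ)), L.Pairwise (fun x y => Nat.Coprime x.1 y.1) →
      ∃ k : ℕ, ∀ x ∈ L, k ≡ t x [MOD x.1]
  | [], _ => ⟨0, by simp⟩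
  | y :: L, h => by
      obtain ⟨hy, hL⟩ := List.pairwise_cons.mp h
      obtain ⟨k1, hk1⟩ := listCRT t L hL
      have hco : Nat.Coprime y.1 (L.map (·.1)).prod :=
        Nat.coprime_list_prod_right_iff.mpr (by
          intro n hn
          obtain ⟨x, hx, rfl⟩ := List.mem_map.mp hn
          exact hy x hx)
      obtain ⟨k, hky, hkP⟩ := Nat.chineseRemainder hco (t y) k1
      refine ⟨k, ?_⟩
      intro x hx
      rcases List.mem_cons.mp hx with rfl | hx'
      · exact hky
      · have hdvd : x.1 ∣ (L.map (·.1)).prod := List.dvd_prod (List.mem_map_of_mem hx')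
        exact (Nat.ModEq.of_dvd hdvd hkP).trans (hk1 x hx')

/-- The core covering-congruence lemma. -/
lemma core (m : ℤ) (hm : 1 < m) (N : ℕ) (L : List (ℕ × ℕ × ℕ))
    (h1 : ∀ x ∈ L, 1 < x.1)
    (hj : ∀ x ∈ L, 0 < x.2.1)
    (hjN : ∀ x ∈ L, x.2.1 ∣ N)
    (hdvd : ∀ x ∈ L, (x.1 : ℤ) ∣ m ^ x.2.1 - 1)
    (hm1 : ∀ x ∈ L, IsCoprime (x.1 : ℤ) (m - 1))
    (hpair : L.Pairwise (fun x y => Nat.Coprime x.1 y.1))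
    (hNpos : 0 < N)
    (hcover : ∀ r : ℕ, r < N → ∃ x ∈ L, r % x.2.1 = x.2.2) :
    {k : ℕ | 0 < k ∧ ∀ n : ℕ, 1 ≤ n →
      1 < (k : ℤ) * (m - 1) * m ^ n + 1 ∧
        ¬ Prime ((k : ℤ) * (m - 1) * m ^ n + 1)}.Infinite := by
  classical
  -- residue existence
  have hres : ∀ x ∈ L, ∃ r : ℕ, (x.1 : ℤ) ∣ (r : ℤ) * (m - 1) * m ^ x.2.2 + 1 := by
    intro x hx
    have hd1 : 1 < x.1 := h1 x hx
    haveI : NeZero x.1 := ⟨by omega⟩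
    have hmj : ((m : ZMod x.1)) ^ x.2.1 = 1 := by
      have := (ZMod.intCast_zmod_eq_zero_iff_dvd _ x.1).mpr (hdvd x hx)
      push_cast at this
      exact sub_eq_zero.mp this
    have hjpos : 0 < x.2.1 := hj x hx
    have hmu : IsUnit (m : ZMod x.1) := by
      apply IsUnit.of_mul_eq_one ((m : ZMod x.1) ^ (x.2.1 - 1))
      rw [← pow_succ']
      rw [show x.2.1 - 1 + 1 = x.2.1 by omega]
      exact hmj
    have hm1u : IsUnit ((m : ZMod x.1) - 1) := by
      obtain ⟨a, b, hab⟩ := hm1 x hx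
      have : ((a * x.1 + b * (m - 1) : ℤ) : ZMod x.1) = 1 := by rw [hab]; norm_cast
      push_cast at this
      rw [ZMod.natCast_self, mul_zero, zero_add] at this
      exact IsUnit.of_mul_eq_one _ (by rw [mul_comm]; exact this)
    obtain ⟨w, hw⟩ := hm1u.mul (hmu.pow x.2.2)
    refine ⟨(-((w⁻¹ : (ZMod x.1)ˣ) : ZMod x.1)).val, ?_⟩
    rw [← ZMod.intCast_zmod_eq_zero_iff_dvd]
    push_cast
    rw [ZMod.natCast_val, ZMod.cast_id]
    calc -((w⁻¹ : (ZMod x.1)ˣ) : ZMod x.1) * ((m : ZMod x.1) - 1) * (m : ZMod x.1) ^ x.2.2 + 1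
        = -(((w⁻¹ : (ZMod x.1)ˣ) : ZMod x.1) * (((m : ZMod x.1) - 1) * (m : ZMod x.1) ^ x.2.2)) + 1 := by
          ring
      _ = 0 := by rw [← hw, Units.inv_mul]; ring
  -- targets
  set t : ℕ × ℕ × ℕ → ℕ := fun x =>
    if h : ∃ r : ℕ, (x.1 : ℤ) ∣ (r : ℤ) * (m - 1) * m ^ x.2.2 + 1 then h.choose else 0 with ht_def
  have ht : ∀ x ∈ L, (x.1 : ℤ) ∣ (t x : ℤ) * (m - 1) * m ^ x.2.2 + 1 := by
    intro x hx
    have h := hres x hx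
    simp only [ht_def, dif_pos h]
    exact h.choose_spec
  obtain ⟨k0, hk0⟩ := listCRT t L hpair
  set P : ℕ := (L.map (·.1)).prod with hP
  have hPpos : 0 < P := by
    apply List.prod_pos
    intro a ha
    obtain ⟨x, hx, rfl⟩ := List.mem_map.mp ha
    exact lt_trans one_pos (h1 x hx)
  have hPd : ∀ x ∈ L, x.1 ∣ P := fun x hx => List.dvd_prod (List.mem_map_of_mem hx)
  -- the family
  set f : ℕ → ℕ := fun i => k0 + (i + 1) * P with hf
  apply Set.infinite_of_injective_forall_mem (f := f)
  case hi =>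
    -- injective
    have : StrictMono f := by
      apply strictMono_nat_of_lt_succ
      intro i
      show k0 + (i + 1) * P < k0 + (i + 1 + 1) * P
      have h : (i + 1) * P < (i + 1 + 1) * P := (Nat.mul_lt_mul_right hPpos).mpr (by omega)
      omega
    exact this.injective
  intro i
  have hfpos : 0 < f i := by
    show 0 < k0 + (i + 1) * P
    have h : 0 < (i + 1) * P := Nat.mul_pos (by omega) hPpos
    omega
  have hfP : P ≤ f i := by
    show P ≤ k0 + (i + 1) * P
    have h : P ≤ (i + 1) * P := Nat.le_mul_of_pos_left P (by omega)
    omega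
  refine ⟨hfpos, ?_⟩
  intro n hn
  have hk1' : (1 : ℤ) ≤ (f i : ℤ) := by exact_mod_cast hfpos
  have hmn : (2 : ℤ) ≤ m ^ n := by
    calc (2 : ℤ) ≤ m := hm
      _ ≤ m ^ n := le_self_pow₀ (by linarith) (by omega)
  have hEgt : 1 < (f i : ℤ) * (m - 1) * m ^ n + 1 := by
    have : (0 : ℤ) < (f i : ℤ) * (m - 1) * m ^ n :=
      mul_pos (mul_pos (by linarith) (by linarith)) (by linarith)
    linarith
  refine ⟨hEgt, ?_⟩
  -- find covering divisor
  obtain ⟨x, hxL, hxr⟩ := hcover (n % N) (Nat.mod_lt _ hNpos)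
  have hna : n % x.2.1 = x.2.2 := by
    rw [← Nat.mod_mod_of_dvd n (hjN x hxL)]
    exact hxr
  set d : ℕ := x.1 with hd
  set j : ℕ := x.2.1 with hj'
  set a : ℕ := x.2.2 with ha'
  have hdgt : 1 < d := h1 x hxL
  -- divisibility of E by d
  have e1 : (d : ℤ) ∣ (t x : ℤ) * (m - 1) * m ^ a + 1 := ht x hxL
  have e2 : (d : ℤ) ∣ (f i : ℤ) - (t x : ℤ) := by
    have hmod : k0 ≡ t x [MOD d] := hk0 x hxL
    have h2 : (d : ℤ) ∣ (t x : ℤ) - (k0 : ℤ) := hmod.dvd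
    have h3 : (d : ℤ) ∣ ((i + 1) * P : ℕ) := by
      exact_mod_cast (hPd x hxL).mul_left (i + 1)
    have : (f i : ℤ) - (t x : ℤ) = ((i + 1) * P : ℕ) - ((t x : ℤ) - (k0 : ℤ)) := by
      simp only [hf]
      push_cast
      ring
    rw [this]
    exact dvd_sub h3 h2
  have e3 : (d : ℤ) ∣ m ^ n - m ^ a := by
    obtain ⟨q, hq⟩ : ∃ q, n = j * q + a := by
      refine ⟨n / j, ?_⟩
      rw [← hna]
      exact (Nat.div_add_mod n j).symm
    have heq : m ^ n - m ^ a = ((m ^ j) ^ q - 1) * m ^ a := by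
      rw [hq, pow_add, pow_mul]
      ring
    rw [heq]
    exact ((hdvd x hxL).trans (by simpa using sub_dvd_pow_sub_pow (m ^ j) 1 q)).mul_right _
  have eE : (d : ℤ) ∣ (f i : ℤ) * (m - 1) * m ^ n + 1 := by
    have hsplit : (f i : ℤ) * (m - 1) * m ^ n + 1 =
        ((t x : ℤ) * (m - 1) * m ^ a + 1) + ((f i : ℤ) - (t x : ℤ)) * ((m - 1) * m ^ a)
          + ((f i : ℤ) * (m - 1)) * (m ^ n - m ^ a) := by
      ring
    rw [hsplit]
    exact dvd_add (dvd_add e1 (e2.mul_right _)) (e3.mul_left _)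
  -- size : d < E
  have hdleP : (d : ℤ) ≤ (f i : ℤ) := by
    exact_mod_cast le_trans (Nat.le_of_dvd hPpos (hPd x hxL)) hfP
  have hdltE : (d : ℤ) < (f i : ℤ) * (m - 1) * m ^ n + 1 := by
    have h1' : (f i : ℤ) * 1 * 2 ≤ (f i : ℤ) * (m - 1) * m ^ n := by
      apply mul_le_mul
      · apply mul_le_mul (le_refl _) (by linarith) (by norm_num) (by linarith)
      · exact hmn
      · norm_num
      · exact mul_nonneg (by linarith) (by linarith)
    linarith
  -- not prime
  intro hp
  obtain ⟨c, hc⟩ := eE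
  rcases hp.irreducible.isUnit_or_isUnit hc with hu | hu
  · rw [Int.isUnit_iff] at hu
    rcases hu with hu | hu <;> [skip; skip] <;> omega
  · rw [Int.isUnit_iff] at hu
    rcases hu with hu | hu
    · rw [hu, mul_one] at hc
      omega
    · rw [hu] at hc
      have : (0 : ℤ) < d := by exact_mod_cast lt_trans one_pos hdgt
      nlinarith [hEgt, hc]




lemma ge7_p3 (y : ℤ) (hy : 3 ≤ y) : 7 ≤ y ^ 2 + y + 1 := by nlinarith
lemma ge7_p4 (y : ℤ) (hy : 3 ≤ y) : 7 ≤ y ^ 2 + 1 := by nlinarith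
lemma ge7_p6 (y : ℤ) (hy : 3 ≤ y) : 7 ≤ y ^ 2 - y + 1 := by nlinarith

lemma hy3 (m : ℤ) (hm3 : 3 ≤ m) (e : ℕ) (he : e ≠ 0) : 3 ≤ m ^ e :=
  le_trans hm3 (le_self_pow₀ (by linarith) he)

noncomputable def d3 (m : ℤ) : ℕ := DD (m ^ 2 + m + 1)

lemma spec3 (m : ℤ) (hm3 : 3 ≤ m) :
    1 < d3 m ∧ ¬ 2 ∣ d3 m ∧ ¬ 3 ∣ d3 m ∧ (d3 m : ℤ) ∣ m ^ 2 + m + 1 :=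
  DD_spec _ (ge7_p3 m hm3) (fun h => sh_odd3 (m) (dvd_trans (by norm_num) h)) (sh_nine3 (m))

lemma hdvd3 (m : ℤ) (hm3 : 3 ≤ m) : (d3 m : ℤ) ∣ m ^ 3 - 1 :=
  (spec3 m hm3).2.2.2.trans ⟨(m - 1), by ring⟩

lemma K3 (m : ℤ) (hm3 : 3 ≤ m) :
    ∀ p : ℕ, p.Prime → p ∣ d3 m → ∀ i : ℕ, i ∣ 3 → i < 3 → (p : ℤ) ∣ m ^ i - 1 → False := by
  intro p hp hpd i hij hilt hpi
  have hpphi : (p : ℤ) ∣ m ^ 2 + m + 1 := (Int.natCast_dvd_natCast.mpr hpd).trans (spec3 m hm3).2.2.2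
  have hc : i ∣ 1 := by
    have hdec : ∀ i' : ℕ, i' < 3 → i' ∣ 3 → (i' ∣ 1) := by decide
    exact hdec i hilt hij
  refine no23 (spec3 m hm3).2.1 (spec3 m hm3).2.2.1 hp hpd ?_
  have h : i ∣ 1 := hc
  refine Or.inr ?_
  have hE : (p : ℤ) ∣ m ^ 1 - 1 := dvd_trans hpi (pow1 m h)
  exact T1 hpphi (by rw [(show (m : ℤ) - 1 = m ^ 1 - 1 by ring)]; exact hE)

noncomputable def d4 (m : ℤ) : ℕ := DD (m ^ 2 + 1)

lemma spec4 (m : ℤ) (hm3 : 3 ≤ m) :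
    1 < d4 m ∧ ¬ 2 ∣ d4 m ∧ ¬ 3 ∣ d4 m ∧ (d4 m : ℤ) ∣ m ^ 2 + 1 :=
  DD_spec _ (ge7_p4 m hm3) (sh_four4 (m)) (sh_nine4 (m))

lemma hdvd4 (m : ℤ) (hm3 : 3 ≤ m) : (d4 m : ℤ) ∣ m ^ 4 - 1 :=
  (spec4 m hm3).2.2.2.trans ⟨(m ^ 2 - 1), by ring⟩

lemma K4 (m : ℤ) (hm3 : 3 ≤ m) :
    ∀ p : ℕ, p.Prime → p ∣ d4 m → ∀ i : ℕ, i ∣ 4 → i < 4 → (p : ℤ) ∣ m ^ i - 1 → False := by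
  intro p hp hpd i hij hilt hpi
  have hpphi : (p : ℤ) ∣ m ^ 2 + 1 := (Int.natCast_dvd_natCast.mpr hpd).trans (spec4 m hm3).2.2.2
  have hc : i ∣ 2 := by
    have hdec : ∀ i' : ℕ, i' < 4 → i' ∣ 4 → (i' ∣ 2) := by decide
    exact hdec i hilt hij
  refine no23 (spec4 m hm3).2.1 (spec4 m hm3).2.2.1 hp hpd ?_
  have h : i ∣ 2 := hc
  refine Or.inl ?_
  have hE : (p : ℤ) ∣ m ^ 2 - 1 := dvd_trans hpi (pow1 m h)
  exact T2 hpphi (by rw [(show ((m : ℤ)) ^ 2 - 1 = m ^ 2 - 1 by ring)]; exact hE)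

noncomputable def d6 (m : ℤ) : ℕ := DD (m ^ 2 - m + 1)

lemma spec6 (m : ℤ) (hm3 : 3 ≤ m) :
    1 < d6 m ∧ ¬ 2 ∣ d6 m ∧ ¬ 3 ∣ d6 m ∧ (d6 m : ℤ) ∣ m ^ 2 - m + 1 :=
  DD_spec _ (ge7_p6 m hm3) (fun h => sh_odd6 (m) (dvd_trans (by norm_num) h)) (sh_nine6 (m))

lemma hdvd6 (m : ℤ) (hm3 : 3 ≤ m) : (d6 m : ℤ) ∣ m ^ 6 - 1 :=
  (spec6 m hm3).2.2.2.trans ⟨((m + 1) * (m ^ 3 - 1)), by ring⟩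

lemma K6 (m : ℤ) (hm3 : 3 ≤ m) :
    ∀ p : ℕ, p.Prime → p ∣ d6 m → ∀ i : ℕ, i ∣ 6 → i < 6 → (p : ℤ) ∣ m ^ i - 1 → False := by
  intro p hp hpd i hij hilt hpi
  have hpphi : (p : ℤ) ∣ m ^ 2 - m + 1 := (Int.natCast_dvd_natCast.mpr hpd).trans (spec6 m hm3).2.2.2
  have hc : i ∣ 3 ∨ i ∣ 2 := by
    have hdec : ∀ i' : ℕ, i' < 6 → i' ∣ 6 → (i' ∣ 3 ∨ i' ∣ 2) := by decide
    exact hdec i hilt hij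
  refine no23 (spec6 m hm3).2.1 (spec6 m hm3).2.2.1 hp hpd ?_
  rcases hc with h | h
  · refine Or.inl ?_
    have hE : (p : ℤ) ∣ m ^ 3 - 1 := dvd_trans hpi (pow1 m h)
    exact T3 hpphi (by rw [(show ((m : ℤ)) ^ 3 - 1 = m ^ 3 - 1 by ring)]; exact hE)
  · refine Or.inr ?_
    have hE : (p : ℤ) ∣ m ^ 2 - 1 := dvd_trans hpi (pow1 m h)
    exact T4 hpphi (by rw [(show ((m : ℤ)) ^ 2 - 1 = m ^ 2 - 1 by ring)]; exact hE)

noncomputable def d8 (m : ℤ) : ℕ := DD ((m ^ 2) ^ 2 + 1)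

lemma spec8 (m : ℤ) (hm3 : 3 ≤ m) :
    1 < d8 m ∧ ¬ 2 ∣ d8 m ∧ ¬ 3 ∣ d8 m ∧ (d8 m : ℤ) ∣ (m ^ 2) ^ 2 + 1 :=
  DD_spec _ (ge7_p4 (m ^ 2) (hy3 m hm3 2 (by norm_num))) (sh_four4 (m ^ 2)) (sh_nine4 (m ^ 2))

lemma hdvd8 (m : ℤ) (hm3 : 3 ≤ m) : (d8 m : ℤ) ∣ m ^ 8 - 1 :=
  (spec8 m hm3).2.2.2.trans ⟨(m ^ 4 - 1), by ring⟩

lemma K8 (m : ℤ) (hm3 : 3 ≤ m) :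
    ∀ p : ℕ, p.Prime → p ∣ d8 m → ∀ i : ℕ, i ∣ 8 → i < 8 → (p : ℤ) ∣ m ^ i - 1 → False := by
  intro p hp hpd i hij hilt hpi
  have hpphi : (p : ℤ) ∣ (m ^ 2) ^ 2 + 1 := (Int.natCast_dvd_natCast.mpr hpd).trans (spec8 m hm3).2.2.2
  have hc : i ∣ 4 := by
    have hdec : ∀ i' : ℕ, i' < 8 → i' ∣ 8 → (i' ∣ 4) := by decide
    exact hdec i hilt hij
  refine no23 (spec8 m hm3).2.1 (spec8 m hm3).2.2.1 hp hpd ?_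
  have h : i ∣ 4 := hc
  refine Or.inl ?_
  have hE : (p : ℤ) ∣ m ^ 4 - 1 := dvd_trans hpi (pow1 m h)
  exact T2 hpphi (by rw [(show ((m ^ 2 : ℤ)) ^ 2 - 1 = m ^ 4 - 1 by ring)]; exact hE)

noncomputable def d9 (m : ℤ) : ℕ := DD ((m ^ 3) ^ 2 + m ^ 3 + 1)

lemma spec9 (m : ℤ) (hm3 : 3 ≤ m) :
    1 < d9 m ∧ ¬ 2 ∣ d9 m ∧ ¬ 3 ∣ d9 m ∧ (d9 m : ℤ) ∣ (m ^ 3) ^ 2 + m ^ 3 + 1 :=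
  DD_spec _ (ge7_p3 (m ^ 3) (hy3 m hm3 3 (by norm_num))) (fun h => sh_odd3 (m ^ 3) (dvd_trans (by norm_num) h)) (sh_nine3 (m ^ 3))

lemma hdvd9 (m : ℤ) (hm3 : 3 ≤ m) : (d9 m : ℤ) ∣ m ^ 9 - 1 :=
  (spec9 m hm3).2.2.2.trans ⟨(m ^ 3 - 1), by ring⟩

lemma K9 (m : ℤ) (hm3 : 3 ≤ m) :
    ∀ p : ℕ, p.Prime → p ∣ d9 m → ∀ i : ℕ, i ∣ 9 → i < 9 → (p : ℤ) ∣ m ^ i - 1 → False := by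
  intro p hp hpd i hij hilt hpi
  have hpphi : (p : ℤ) ∣ (m ^ 3) ^ 2 + m ^ 3 + 1 := (Int.natCast_dvd_natCast.mpr hpd).trans (spec9 m hm3).2.2.2
  have hc : i ∣ 3 := by
    have hdec : ∀ i' : ℕ, i' < 9 → i' ∣ 9 → (i' ∣ 3) := by decide
    exact hdec i hilt hij
  refine no23 (spec9 m hm3).2.1 (spec9 m hm3).2.2.1 hp hpd ?_
  have h : i ∣ 3 := hc
  refine Or.inr ?_
  have hE : (p : ℤ) ∣ m ^ 3 - 1 := dvd_trans hpi (pow1 m h)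
  exact T1 hpphi (by rw [(show (m ^ 3 : ℤ) - 1 = m ^ 3 - 1 by ring)]; exact hE)

noncomputable def d12 (m : ℤ) : ℕ := DD ((m ^ 2) ^ 2 - m ^ 2 + 1)

lemma spec12 (m : ℤ) (hm3 : 3 ≤ m) :
    1 < d12 m ∧ ¬ 2 ∣ d12 m ∧ ¬ 3 ∣ d12 m ∧ (d12 m : ℤ) ∣ (m ^ 2) ^ 2 - m ^ 2 + 1 :=
  DD_spec _ (ge7_p6 (m ^ 2) (hy3 m hm3 2 (by norm_num))) (fun h => sh_odd6 (m ^ 2) (dvd_trans (by norm_num) h)) (sh_nine6 (m ^ 2))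

lemma hdvd12 (m : ℤ) (hm3 : 3 ≤ m) : (d12 m : ℤ) ∣ m ^ 12 - 1 :=
  (spec12 m hm3).2.2.2.trans ⟨((m ^ 2 + 1) * (m ^ 6 - 1)), by ring⟩

lemma K12 (m : ℤ) (hm3 : 3 ≤ m) :
    ∀ p : ℕ, p.Prime → p ∣ d12 m → ∀ i : ℕ, i ∣ 12 → i < 12 → (p : ℤ) ∣ m ^ i - 1 → False := by
  intro p hp hpd i hij hilt hpi
  have hpphi : (p : ℤ) ∣ (m ^ 2) ^ 2 - m ^ 2 + 1 := (Int.natCast_dvd_natCast.mpr hpd).trans (spec12 m hm3).2.2.2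
  have hc : i ∣ 6 ∨ i ∣ 4 := by
    have hdec : ∀ i' : ℕ, i' < 12 → i' ∣ 12 → (i' ∣ 6 ∨ i' ∣ 4) := by decide
    exact hdec i hilt hij
  refine no23 (spec12 m hm3).2.1 (spec12 m hm3).2.2.1 hp hpd ?_
  rcases hc with h | h
  · refine Or.inl ?_
    have hE : (p : ℤ) ∣ m ^ 6 - 1 := dvd_trans hpi (pow1 m h)
    exact T3 hpphi (by rw [(show ((m ^ 2 : ℤ)) ^ 3 - 1 = m ^ 6 - 1 by ring)]; exact hE)
  · refine Or.inr ?_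
    have hE : (p : ℤ) ∣ m ^ 4 - 1 := dvd_trans hpi (pow1 m h)
    exact T4 hpphi (by rw [(show ((m ^ 2 : ℤ)) ^ 2 - 1 = m ^ 4 - 1 by ring)]; exact hE)

noncomputable def d16 (m : ℤ) : ℕ := DD ((m ^ 4) ^ 2 + 1)

lemma spec16 (m : ℤ) (hm3 : 3 ≤ m) :
    1 < d16 m ∧ ¬ 2 ∣ d16 m ∧ ¬ 3 ∣ d16 m ∧ (d16 m : ℤ) ∣ (m ^ 4) ^ 2 + 1 :=
  DD_spec _ (ge7_p4 (m ^ 4) (hy3 m hm3 4 (by norm_num))) (sh_four4 (m ^ 4)) (sh_nine4 (m ^ 4))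

lemma hdvd16 (m : ℤ) (hm3 : 3 ≤ m) : (d16 m : ℤ) ∣ m ^ 16 - 1 :=
  (spec16 m hm3).2.2.2.trans ⟨(m ^ 8 - 1), by ring⟩

lemma K16 (m : ℤ) (hm3 : 3 ≤ m) :
    ∀ p : ℕ, p.Prime → p ∣ d16 m → ∀ i : ℕ, i ∣ 16 → i < 16 → (p : ℤ) ∣ m ^ i - 1 → False := by
  intro p hp hpd i hij hilt hpi
  have hpphi : (p : ℤ) ∣ (m ^ 4) ^ 2 + 1 := (Int.natCast_dvd_natCast.mpr hpd).trans (spec16 m hm3).2.2.2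
  have hc : i ∣ 8 := by
    have hdec : ∀ i' : ℕ, i' < 16 → i' ∣ 16 → (i' ∣ 8) := by decide
    exact hdec i hilt hij
  refine no23 (spec16 m hm3).2.1 (spec16 m hm3).2.2.1 hp hpd ?_
  have h : i ∣ 8 := hc
  refine Or.inl ?_
  have hE : (p : ℤ) ∣ m ^ 8 - 1 := dvd_trans hpi (pow1 m h)
  exact T2 hpphi (by rw [(show ((m ^ 4 : ℤ)) ^ 2 - 1 = m ^ 8 - 1 by ring)]; exact hE)

noncomputable def d18 (m : ℤ) : ℕ := DD ((m ^ 3) ^ 2 - m ^ 3 + 1)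

lemma spec18 (m : ℤ) (hm3 : 3 ≤ m) :
    1 < d18 m ∧ ¬ 2 ∣ d18 m ∧ ¬ 3 ∣ d18 m ∧ (d18 m : ℤ) ∣ (m ^ 3) ^ 2 - m ^ 3 + 1 :=
  DD_spec _ (ge7_p6 (m ^ 3) (hy3 m hm3 3 (by norm_num))) (fun h => sh_odd6 (m ^ 3) (dvd_trans (by norm_num) h)) (sh_nine6 (m ^ 3))

lemma hdvd18 (m : ℤ) (hm3 : 3 ≤ m) : (d18 m : ℤ) ∣ m ^ 18 - 1 :=
  (spec18 m hm3).2.2.2.trans ⟨((m ^ 3 + 1) * (m ^ 9 - 1)), by ring⟩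

lemma K18 (m : ℤ) (hm3 : 3 ≤ m) :
    ∀ p : ℕ, p.Prime → p ∣ d18 m → ∀ i : ℕ, i ∣ 18 → i < 18 → (p : ℤ) ∣ m ^ i - 1 → False := by
  intro p hp hpd i hij hilt hpi
  have hpphi : (p : ℤ) ∣ (m ^ 3) ^ 2 - m ^ 3 + 1 := (Int.natCast_dvd_natCast.mpr hpd).trans (spec18 m hm3).2.2.2
  have hc : i ∣ 9 ∨ i ∣ 6 := by
    have hdec : ∀ i' : ℕ, i' < 18 → i' ∣ 18 → (i' ∣ 9 ∨ i' ∣ 6) := by decide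
    exact hdec i hilt hij
  refine no23 (spec18 m hm3).2.1 (spec18 m hm3).2.2.1 hp hpd ?_
  rcases hc with h | h
  · refine Or.inl ?_
    have hE : (p : ℤ) ∣ m ^ 9 - 1 := dvd_trans hpi (pow1 m h)
    exact T3 hpphi (by rw [(show ((m ^ 3 : ℤ)) ^ 3 - 1 = m ^ 9 - 1 by ring)]; exact hE)
  · refine Or.inr ?_
    have hE : (p : ℤ) ∣ m ^ 6 - 1 := dvd_trans hpi (pow1 m h)
    exact T4 hpphi (by rw [(show ((m ^ 3 : ℤ)) ^ 2 - 1 = m ^ 6 - 1 by ring)]; exact hE)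

noncomputable def d24 (m : ℤ) : ℕ := DD ((m ^ 4) ^ 2 - m ^ 4 + 1)

lemma spec24 (m : ℤ) (hm3 : 3 ≤ m) :
    1 < d24 m ∧ ¬ 2 ∣ d24 m ∧ ¬ 3 ∣ d24 m ∧ (d24 m : ℤ) ∣ (m ^ 4) ^ 2 - m ^ 4 + 1 :=
  DD_spec _ (ge7_p6 (m ^ 4) (hy3 m hm3 4 (by norm_num))) (fun h => sh_odd6 (m ^ 4) (dvd_trans (by norm_num) h)) (sh_nine6 (m ^ 4))

lemma hdvd24 (m : ℤ) (hm3 : 3 ≤ m) : (d24 m : ℤ) ∣ m ^ 24 - 1 :=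
  (spec24 m hm3).2.2.2.trans ⟨((m ^ 4 + 1) * (m ^ 12 - 1)), by ring⟩

lemma K24 (m : ℤ) (hm3 : 3 ≤ m) :
    ∀ p : ℕ, p.Prime → p ∣ d24 m → ∀ i : ℕ, i ∣ 24 → i < 24 → (p : ℤ) ∣ m ^ i - 1 → False := by
  intro p hp hpd i hij hilt hpi
  have hpphi : (p : ℤ) ∣ (m ^ 4) ^ 2 - m ^ 4 + 1 := (Int.natCast_dvd_natCast.mpr hpd).trans (spec24 m hm3).2.2.2
  have hc : i ∣ 12 ∨ i ∣ 8 := by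
    have hdec : ∀ i' : ℕ, i' < 24 → i' ∣ 24 → (i' ∣ 12 ∨ i' ∣ 8) := by decide
    exact hdec i hilt hij
  refine no23 (spec24 m hm3).2.1 (spec24 m hm3).2.2.1 hp hpd ?_
  rcases hc with h | h
  · refine Or.inl ?_
    have hE : (p : ℤ) ∣ m ^ 12 - 1 := dvd_trans hpi (pow1 m h)
    exact T3 hpphi (by rw [(show ((m ^ 4 : ℤ)) ^ 3 - 1 = m ^ 12 - 1 by ring)]; exact hE)
  · refine Or.inr ?_
    have hE : (p : ℤ) ∣ m ^ 8 - 1 := dvd_trans hpi (pow1 m h)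
    exact T4 hpphi (by rw [(show ((m ^ 4 : ℤ)) ^ 2 - 1 = m ^ 8 - 1 by ring)]; exact hE)

noncomputable def d36 (m : ℤ) : ℕ := DD ((m ^ 6) ^ 2 - m ^ 6 + 1)

lemma spec36 (m : ℤ) (hm3 : 3 ≤ m) :
    1 < d36 m ∧ ¬ 2 ∣ d36 m ∧ ¬ 3 ∣ d36 m ∧ (d36 m : ℤ) ∣ (m ^ 6) ^ 2 - m ^ 6 + 1 :=
  DD_spec _ (ge7_p6 (m ^ 6) (hy3 m hm3 6 (by norm_num))) (fun h => sh_odd6 (m ^ 6) (dvd_trans (by norm_num) h)) (sh_nine6 (m ^ 6))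

lemma hdvd36 (m : ℤ) (hm3 : 3 ≤ m) : (d36 m : ℤ) ∣ m ^ 36 - 1 :=
  (spec36 m hm3).2.2.2.trans ⟨((m ^ 6 + 1) * (m ^ 18 - 1)), by ring⟩

lemma K36 (m : ℤ) (hm3 : 3 ≤ m) :
    ∀ p : ℕ, p.Prime → p ∣ d36 m → ∀ i : ℕ, i ∣ 36 → i < 36 → (p : ℤ) ∣ m ^ i - 1 → False := by
  intro p hp hpd i hij hilt hpi
  have hpphi : (p : ℤ) ∣ (m ^ 6) ^ 2 - m ^ 6 + 1 := (Int.natCast_dvd_natCast.mpr hpd).trans (spec36 m hm3).2.2.2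
  have hc : i ∣ 18 ∨ i ∣ 12 := by
    have hdec : ∀ i' : ℕ, i' < 36 → i' ∣ 36 → (i' ∣ 18 ∨ i' ∣ 12) := by decide
    exact hdec i hilt hij
  refine no23 (spec36 m hm3).2.1 (spec36 m hm3).2.2.1 hp hpd ?_
  rcases hc with h | h
  · refine Or.inl ?_
    have hE : (p : ℤ) ∣ m ^ 18 - 1 := dvd_trans hpi (pow1 m h)
    exact T3 hpphi (by rw [(show ((m ^ 6 : ℤ)) ^ 3 - 1 = m ^ 18 - 1 by ring)]; exact hE)
  · refine Or.inr ?_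
    have hE : (p : ℤ) ∣ m ^ 12 - 1 := dvd_trans hpi (pow1 m h)
    exact T4 hpphi (by rw [(show ((m ^ 6 : ℤ)) ^ 2 - 1 = m ^ 12 - 1 by ring)]; exact hE)

noncomputable def d48 (m : ℤ) : ℕ := DD ((m ^ 8) ^ 2 - m ^ 8 + 1)

lemma spec48 (m : ℤ) (hm3 : 3 ≤ m) :
    1 < d48 m ∧ ¬ 2 ∣ d48 m ∧ ¬ 3 ∣ d48 m ∧ (d48 m : ℤ) ∣ (m ^ 8) ^ 2 - m ^ 8 + 1 :=
  DD_spec _ (ge7_p6 (m ^ 8) (hy3 m hm3 8 (by norm_num))) (fun h => sh_odd6 (m ^ 8) (dvd_trans (by norm_num) h)) (sh_nine6 (m ^ 8))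

lemma hdvd48 (m : ℤ) (hm3 : 3 ≤ m) : (d48 m : ℤ) ∣ m ^ 48 - 1 :=
  (spec48 m hm3).2.2.2.trans ⟨((m ^ 8 + 1) * (m ^ 24 - 1)), by ring⟩

lemma K48 (m : ℤ) (hm3 : 3 ≤ m) :
    ∀ p : ℕ, p.Prime → p ∣ d48 m → ∀ i : ℕ, i ∣ 48 → i < 48 → (p : ℤ) ∣ m ^ i - 1 → False := by
  intro p hp hpd i hij hilt hpi
  have hpphi : (p : ℤ) ∣ (m ^ 8) ^ 2 - m ^ 8 + 1 := (Int.natCast_dvd_natCast.mpr hpd).trans (spec48 m hm3).2.2.2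
  have hc : i ∣ 24 ∨ i ∣ 16 := by
    have hdec : ∀ i' : ℕ, i' < 48 → i' ∣ 48 → (i' ∣ 24 ∨ i' ∣ 16) := by decide
    exact hdec i hilt hij
  refine no23 (spec48 m hm3).2.1 (spec48 m hm3).2.2.1 hp hpd ?_
  rcases hc with h | h
  · refine Or.inl ?_
    have hE : (p : ℤ) ∣ m ^ 24 - 1 := dvd_trans hpi (pow1 m h)
    exact T3 hpphi (by rw [(show ((m ^ 8 : ℤ)) ^ 3 - 1 = m ^ 24 - 1 by ring)]; exact hE)
  · refine Or.inr ?_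
    have hE : (p : ℤ) ∣ m ^ 16 - 1 := dvd_trans hpi (pow1 m h)
    exact T4 hpphi (by rw [(show ((m ^ 8 : ℤ)) ^ 2 - 1 = m ^ 16 - 1 by ring)]; exact hE)

noncomputable def d72 (m : ℤ) : ℕ := DD ((m ^ 12) ^ 2 - m ^ 12 + 1)

lemma spec72 (m : ℤ) (hm3 : 3 ≤ m) :
    1 < d72 m ∧ ¬ 2 ∣ d72 m ∧ ¬ 3 ∣ d72 m ∧ (d72 m : ℤ) ∣ (m ^ 12) ^ 2 - m ^ 12 + 1 :=
  DD_spec _ (ge7_p6 (m ^ 12) (hy3 m hm3 12 (by norm_num))) (fun h => sh_odd6 (m ^ 12) (dvd_trans (by norm_num) h)) (sh_nine6 (m ^ 12))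

lemma hdvd72 (m : ℤ) (hm3 : 3 ≤ m) : (d72 m : ℤ) ∣ m ^ 72 - 1 :=
  (spec72 m hm3).2.2.2.trans ⟨((m ^ 12 + 1) * (m ^ 36 - 1)), by ring⟩

lemma K72 (m : ℤ) (hm3 : 3 ≤ m) :
    ∀ p : ℕ, p.Prime → p ∣ d72 m → ∀ i : ℕ, i ∣ 72 → i < 72 → (p : ℤ) ∣ m ^ i - 1 → False := by
  intro p hp hpd i hij hilt hpi
  have hpphi : (p : ℤ) ∣ (m ^ 12) ^ 2 - m ^ 12 + 1 := (Int.natCast_dvd_natCast.mpr hpd).trans (spec72 m hm3).2.2.2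
  have hc : i ∣ 36 ∨ i ∣ 24 := by
    have hdec : ∀ i' : ℕ, i' < 72 → i' ∣ 72 → (i' ∣ 36 ∨ i' ∣ 24) := by decide
    exact hdec i hilt hij
  refine no23 (spec72 m hm3).2.1 (spec72 m hm3).2.2.1 hp hpd ?_
  rcases hc with h | h
  · refine Or.inl ?_
    have hE : (p : ℤ) ∣ m ^ 36 - 1 := dvd_trans hpi (pow1 m h)
    exact T3 hpphi (by rw [(show ((m ^ 12 : ℤ)) ^ 3 - 1 = m ^ 36 - 1 by ring)]; exact hE)
  · refine Or.inr ?_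
    have hE : (p : ℤ) ∣ m ^ 24 - 1 := dvd_trans hpi (pow1 m h)
    exact T4 hpphi (by rw [(show ((m ^ 12 : ℤ)) ^ 2 - 1 = m ^ 24 - 1 by ring)]; exact hE)



lemma isCoprime_m1 (m : ℤ) (d j : ℕ) (hj : 1 < j)
    (K : ∀ p : ℕ, p.Prime → p ∣ d → ∀ i : ℕ, i ∣ j → i < j → (p : ℤ) ∣ m ^ i - 1 → False) :
    IsCoprime (d : ℤ) (m - 1) := by
  rw [Int.isCoprime_iff_gcd_eq_one]
  by_contra h
  have h2 : ¬ Nat.Coprime d (m - 1).natAbs := by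
    intro hc
    apply h
    simpa [Int.gcd] using hc
  obtain ⟨p, hp, hpd, hpm⟩ := Nat.Prime.not_coprime_iff_dvd.mp h2
  have hpm' : (p : ℤ) ∣ m - 1 := by
    have : (p : ℤ) ∣ ((m - 1).natAbs : ℤ) := by exact_mod_cast hpm
    exact Int.dvd_natAbs.mp this
  exact K p hp hpd 1 (one_dvd _) hj (by simpa using hpm')

lemma mk_coprime (m : ℤ) {j1 j2 d1 d2 : ℕ} (hlt : Nat.gcd j1 j2 < j2)
    (hd1 : (d1 : ℤ) ∣ m ^ j1 - 1) (hd2 : (d2 : ℤ) ∣ m ^ j2 - 1)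
    (K2 : ∀ p : ℕ, p.Prime → p ∣ d2 → ∀ i : ℕ, i ∣ j2 → i < j2 → (p : ℤ) ∣ m ^ i - 1 → False) :
    Nat.Coprime d1 d2 := by
  by_contra h
  obtain ⟨p, hp, hpa, hpb⟩ := Nat.Prime.not_coprime_iff_dvd.mp h
  have h1 : (p : ℤ) ∣ m ^ j1 - 1 := dvd_trans (Int.natCast_dvd_natCast.mpr hpa) hd1
  have h2 : (p : ℤ) ∣ m ^ j2 - 1 := dvd_trans (Int.natCast_dvd_natCast.mpr hpb) hd2
  have hg := dvd_pow_gcd m p j1 j2 hp h1 h2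
  exact K2 p hp hpb _ (Nat.gcd_dvd_right _ _) hlt hg

lemma cop_3_4 (m : ℤ) (hm3 : 3 ≤ m) : Nat.Coprime (d3 m) (d4 m) :=
  mk_coprime m (by norm_num) (hdvd3 m hm3) (hdvd4 m hm3) (K4 m hm3)

lemma cop_3_6 (m : ℤ) (hm3 : 3 ≤ m) : Nat.Coprime (d3 m) (d6 m) :=
  mk_coprime m (by norm_num) (hdvd3 m hm3) (hdvd6 m hm3) (K6 m hm3)

lemma cop_3_8 (m : ℤ) (hm3 : 3 ≤ m) : Nat.Coprime (d3 m) (d8 m) :=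
  mk_coprime m (by norm_num) (hdvd3 m hm3) (hdvd8 m hm3) (K8 m hm3)

lemma cop_3_9 (m : ℤ) (hm3 : 3 ≤ m) : Nat.Coprime (d3 m) (d9 m) :=
  mk_coprime m (by norm_num) (hdvd3 m hm3) (hdvd9 m hm3) (K9 m hm3)

lemma cop_3_12 (m : ℤ) (hm3 : 3 ≤ m) : Nat.Coprime (d3 m) (d12 m) :=
  mk_coprime m (by norm_num) (hdvd3 m hm3) (hdvd12 m hm3) (K12 m hm3)

lemma cop_3_16 (m : ℤ) (hm3 : 3 ≤ m) : Nat.Coprime (d3 m) (d16 m) :=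
  mk_coprime m (by norm_num) (hdvd3 m hm3) (hdvd16 m hm3) (K16 m hm3)

lemma cop_3_18 (m : ℤ) (hm3 : 3 ≤ m) : Nat.Coprime (d3 m) (d18 m) :=
  mk_coprime m (by norm_num) (hdvd3 m hm3) (hdvd18 m hm3) (K18 m hm3)

lemma cop_3_24 (m : ℤ) (hm3 : 3 ≤ m) : Nat.Coprime (d3 m) (d24 m) :=
  mk_coprime m (by norm_num) (hdvd3 m hm3) (hdvd24 m hm3) (K24 m hm3)

lemma cop_3_36 (m : ℤ) (hm3 : 3 ≤ m) : Nat.Coprime (d3 m) (d36 m) :=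
  mk_coprime m (by norm_num) (hdvd3 m hm3) (hdvd36 m hm3) (K36 m hm3)

lemma cop_3_48 (m : ℤ) (hm3 : 3 ≤ m) : Nat.Coprime (d3 m) (d48 m) :=
  mk_coprime m (by norm_num) (hdvd3 m hm3) (hdvd48 m hm3) (K48 m hm3)

lemma cop_3_72 (m : ℤ) (hm3 : 3 ≤ m) : Nat.Coprime (d3 m) (d72 m) :=
  mk_coprime m (by norm_num) (hdvd3 m hm3) (hdvd72 m hm3) (K72 m hm3)

lemma cop_4_6 (m : ℤ) (hm3 : 3 ≤ m) : Nat.Coprime (d4 m) (d6 m) :=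
  mk_coprime m (by norm_num) (hdvd4 m hm3) (hdvd6 m hm3) (K6 m hm3)

lemma cop_4_8 (m : ℤ) (hm3 : 3 ≤ m) : Nat.Coprime (d4 m) (d8 m) :=
  mk_coprime m (by norm_num) (hdvd4 m hm3) (hdvd8 m hm3) (K8 m hm3)

lemma cop_4_9 (m : ℤ) (hm3 : 3 ≤ m) : Nat.Coprime (d4 m) (d9 m) :=
  mk_coprime m (by norm_num) (hdvd4 m hm3) (hdvd9 m hm3) (K9 m hm3)

lemma cop_4_12 (m : ℤ) (hm3 : 3 ≤ m) : Nat.Coprime (d4 m) (d12 m) :=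
  mk_coprime m (by norm_num) (hdvd4 m hm3) (hdvd12 m hm3) (K12 m hm3)

lemma cop_4_16 (m : ℤ) (hm3 : 3 ≤ m) : Nat.Coprime (d4 m) (d16 m) :=
  mk_coprime m (by norm_num) (hdvd4 m hm3) (hdvd16 m hm3) (K16 m hm3)

lemma cop_4_18 (m : ℤ) (hm3 : 3 ≤ m) : Nat.Coprime (d4 m) (d18 m) :=
  mk_coprime m (by norm_num) (hdvd4 m hm3) (hdvd18 m hm3) (K18 m hm3)

lemma cop_4_24 (m : ℤ) (hm3 : 3 ≤ m) : Nat.Coprime (d4 m) (d24 m) :=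
  mk_coprime m (by norm_num) (hdvd4 m hm3) (hdvd24 m hm3) (K24 m hm3)

lemma cop_4_36 (m : ℤ) (hm3 : 3 ≤ m) : Nat.Coprime (d4 m) (d36 m) :=
  mk_coprime m (by norm_num) (hdvd4 m hm3) (hdvd36 m hm3) (K36 m hm3)

lemma cop_4_48 (m : ℤ) (hm3 : 3 ≤ m) : Nat.Coprime (d4 m) (d48 m) :=
  mk_coprime m (by norm_num) (hdvd4 m hm3) (hdvd48 m hm3) (K48 m hm3)

lemma cop_4_72 (m : ℤ) (hm3 : 3 ≤ m) : Nat.Coprime (d4 m) (d72 m) :=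
  mk_coprime m (by norm_num) (hdvd4 m hm3) (hdvd72 m hm3) (K72 m hm3)

lemma cop_6_8 (m : ℤ) (hm3 : 3 ≤ m) : Nat.Coprime (d6 m) (d8 m) :=
  mk_coprime m (by norm_num) (hdvd6 m hm3) (hdvd8 m hm3) (K8 m hm3)

lemma cop_6_9 (m : ℤ) (hm3 : 3 ≤ m) : Nat.Coprime (d6 m) (d9 m) :=
  mk_coprime m (by norm_num) (hdvd6 m hm3) (hdvd9 m hm3) (K9 m hm3)

lemma cop_6_12 (m : ℤ) (hm3 : 3 ≤ m) : Nat.Coprime (d6 m) (d12 m) :=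
  mk_coprime m (by norm_num) (hdvd6 m hm3) (hdvd12 m hm3) (K12 m hm3)

lemma cop_6_16 (m : ℤ) (hm3 : 3 ≤ m) : Nat.Coprime (d6 m) (d16 m) :=
  mk_coprime m (by norm_num) (hdvd6 m hm3) (hdvd16 m hm3) (K16 m hm3)

lemma cop_6_18 (m : ℤ) (hm3 : 3 ≤ m) : Nat.Coprime (d6 m) (d18 m) :=
  mk_coprime m (by norm_num) (hdvd6 m hm3) (hdvd18 m hm3) (K18 m hm3)

lemma cop_6_24 (m : ℤ) (hm3 : 3 ≤ m) : Nat.Coprime (d6 m) (d24 m) :=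
  mk_coprime m (by norm_num) (hdvd6 m hm3) (hdvd24 m hm3) (K24 m hm3)

lemma cop_6_36 (m : ℤ) (hm3 : 3 ≤ m) : Nat.Coprime (d6 m) (d36 m) :=
  mk_coprime m (by norm_num) (hdvd6 m hm3) (hdvd36 m hm3) (K36 m hm3)

lemma cop_6_48 (m : ℤ) (hm3 : 3 ≤ m) : Nat.Coprime (d6 m) (d48 m) :=
  mk_coprime m (by norm_num) (hdvd6 m hm3) (hdvd48 m hm3) (K48 m hm3)

lemma cop_6_72 (m : ℤ) (hm3 : 3 ≤ m) : Nat.Coprime (d6 m) (d72 m) :=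
  mk_coprime m (by norm_num) (hdvd6 m hm3) (hdvd72 m hm3) (K72 m hm3)

lemma cop_8_9 (m : ℤ) (hm3 : 3 ≤ m) : Nat.Coprime (d8 m) (d9 m) :=
  mk_coprime m (by norm_num) (hdvd8 m hm3) (hdvd9 m hm3) (K9 m hm3)

lemma cop_8_12 (m : ℤ) (hm3 : 3 ≤ m) : Nat.Coprime (d8 m) (d12 m) :=
  mk_coprime m (by norm_num) (hdvd8 m hm3) (hdvd12 m hm3) (K12 m hm3)

lemma cop_8_16 (m : ℤ) (hm3 : 3 ≤ m) : Nat.Coprime (d8 m) (d16 m) :=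
  mk_coprime m (by norm_num) (hdvd8 m hm3) (hdvd16 m hm3) (K16 m hm3)

lemma cop_8_18 (m : ℤ) (hm3 : 3 ≤ m) : Nat.Coprime (d8 m) (d18 m) :=
  mk_coprime m (by norm_num) (hdvd8 m hm3) (hdvd18 m hm3) (K18 m hm3)

lemma cop_8_24 (m : ℤ) (hm3 : 3 ≤ m) : Nat.Coprime (d8 m) (d24 m) :=
  mk_coprime m (by norm_num) (hdvd8 m hm3) (hdvd24 m hm3) (K24 m hm3)

lemma cop_8_36 (m : ℤ) (hm3 : 3 ≤ m) : Nat.Coprime (d8 m) (d36 m) :=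
  mk_coprime m (by norm_num) (hdvd8 m hm3) (hdvd36 m hm3) (K36 m hm3)

lemma cop_8_48 (m : ℤ) (hm3 : 3 ≤ m) : Nat.Coprime (d8 m) (d48 m) :=
  mk_coprime m (by norm_num) (hdvd8 m hm3) (hdvd48 m hm3) (K48 m hm3)

lemma cop_8_72 (m : ℤ) (hm3 : 3 ≤ m) : Nat.Coprime (d8 m) (d72 m) :=
  mk_coprime m (by norm_num) (hdvd8 m hm3) (hdvd72 m hm3) (K72 m hm3)

lemma cop_9_12 (m : ℤ) (hm3 : 3 ≤ m) : Nat.Coprime (d9 m) (d12 m) :=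
  mk_coprime m (by norm_num) (hdvd9 m hm3) (hdvd12 m hm3) (K12 m hm3)

lemma cop_9_16 (m : ℤ) (hm3 : 3 ≤ m) : Nat.Coprime (d9 m) (d16 m) :=
  mk_coprime m (by norm_num) (hdvd9 m hm3) (hdvd16 m hm3) (K16 m hm3)

lemma cop_9_18 (m : ℤ) (hm3 : 3 ≤ m) : Nat.Coprime (d9 m) (d18 m) :=
  mk_coprime m (by norm_num) (hdvd9 m hm3) (hdvd18 m hm3) (K18 m hm3)

lemma cop_9_24 (m : ℤ) (hm3 : 3 ≤ m) : Nat.Coprime (d9 m) (d24 m) :=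
  mk_coprime m (by norm_num) (hdvd9 m hm3) (hdvd24 m hm3) (K24 m hm3)

lemma cop_9_36 (m : ℤ) (hm3 : 3 ≤ m) : Nat.Coprime (d9 m) (d36 m) :=
  mk_coprime m (by norm_num) (hdvd9 m hm3) (hdvd36 m hm3) (K36 m hm3)

lemma cop_9_48 (m : ℤ) (hm3 : 3 ≤ m) : Nat.Coprime (d9 m) (d48 m) :=
  mk_coprime m (by norm_num) (hdvd9 m hm3) (hdvd48 m hm3) (K48 m hm3)

lemma cop_9_72 (m : ℤ) (hm3 : 3 ≤ m) : Nat.Coprime (d9 m) (d72 m) :=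
  mk_coprime m (by norm_num) (hdvd9 m hm3) (hdvd72 m hm3) (K72 m hm3)

lemma cop_12_16 (m : ℤ) (hm3 : 3 ≤ m) : Nat.Coprime (d12 m) (d16 m) :=
  mk_coprime m (by norm_num) (hdvd12 m hm3) (hdvd16 m hm3) (K16 m hm3)

lemma cop_12_18 (m : ℤ) (hm3 : 3 ≤ m) : Nat.Coprime (d12 m) (d18 m) :=
  mk_coprime m (by norm_num) (hdvd12 m hm3) (hdvd18 m hm3) (K18 m hm3)

lemma cop_12_24 (m : ℤ) (hm3 : 3 ≤ m) : Nat.Coprime (d12 m) (d24 m) :=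
  mk_coprime m (by norm_num) (hdvd12 m hm3) (hdvd24 m hm3) (K24 m hm3)

lemma cop_12_36 (m : ℤ) (hm3 : 3 ≤ m) : Nat.Coprime (d12 m) (d36 m) :=
  mk_coprime m (by norm_num) (hdvd12 m hm3) (hdvd36 m hm3) (K36 m hm3)

lemma cop_12_48 (m : ℤ) (hm3 : 3 ≤ m) : Nat.Coprime (d12 m) (d48 m) :=
  mk_coprime m (by norm_num) (hdvd12 m hm3) (hdvd48 m hm3) (K48 m hm3)

lemma cop_12_72 (m : ℤ) (hm3 : 3 ≤ m) : Nat.Coprime (d12 m) (d72 m) :=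
  mk_coprime m (by norm_num) (hdvd12 m hm3) (hdvd72 m hm3) (K72 m hm3)

lemma cop_16_18 (m : ℤ) (hm3 : 3 ≤ m) : Nat.Coprime (d16 m) (d18 m) :=
  mk_coprime m (by norm_num) (hdvd16 m hm3) (hdvd18 m hm3) (K18 m hm3)

lemma cop_16_24 (m : ℤ) (hm3 : 3 ≤ m) : Nat.Coprime (d16 m) (d24 m) :=
  mk_coprime m (by norm_num) (hdvd16 m hm3) (hdvd24 m hm3) (K24 m hm3)

lemma cop_16_36 (m : ℤ) (hm3 : 3 ≤ m) : Nat.Coprime (d16 m) (d36 m) :=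
  mk_coprime m (by norm_num) (hdvd16 m hm3) (hdvd36 m hm3) (K36 m hm3)

lemma cop_16_48 (m : ℤ) (hm3 : 3 ≤ m) : Nat.Coprime (d16 m) (d48 m) :=
  mk_coprime m (by norm_num) (hdvd16 m hm3) (hdvd48 m hm3) (K48 m hm3)

lemma cop_16_72 (m : ℤ) (hm3 : 3 ≤ m) : Nat.Coprime (d16 m) (d72 m) :=
  mk_coprime m (by norm_num) (hdvd16 m hm3) (hdvd72 m hm3) (K72 m hm3)

lemma cop_18_24 (m : ℤ) (hm3 : 3 ≤ m) : Nat.Coprime (d18 m) (d24 m) :=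
  mk_coprime m (by norm_num) (hdvd18 m hm3) (hdvd24 m hm3) (K24 m hm3)

lemma cop_18_36 (m : ℤ) (hm3 : 3 ≤ m) : Nat.Coprime (d18 m) (d36 m) :=
  mk_coprime m (by norm_num) (hdvd18 m hm3) (hdvd36 m hm3) (K36 m hm3)

lemma cop_18_48 (m : ℤ) (hm3 : 3 ≤ m) : Nat.Coprime (d18 m) (d48 m) :=
  mk_coprime m (by norm_num) (hdvd18 m hm3) (hdvd48 m hm3) (K48 m hm3)

lemma cop_18_72 (m : ℤ) (hm3 : 3 ≤ m) : Nat.Coprime (d18 m) (d72 m) :=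
  mk_coprime m (by norm_num) (hdvd18 m hm3) (hdvd72 m hm3) (K72 m hm3)

lemma cop_24_36 (m : ℤ) (hm3 : 3 ≤ m) : Nat.Coprime (d24 m) (d36 m) :=
  mk_coprime m (by norm_num) (hdvd24 m hm3) (hdvd36 m hm3) (K36 m hm3)

lemma cop_24_48 (m : ℤ) (hm3 : 3 ≤ m) : Nat.Coprime (d24 m) (d48 m) :=
  mk_coprime m (by norm_num) (hdvd24 m hm3) (hdvd48 m hm3) (K48 m hm3)

lemma cop_24_72 (m : ℤ) (hm3 : 3 ≤ m) : Nat.Coprime (d24 m) (d72 m) :=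
  mk_coprime m (by norm_num) (hdvd24 m hm3) (hdvd72 m hm3) (K72 m hm3)

lemma cop_36_48 (m : ℤ) (hm3 : 3 ≤ m) : Nat.Coprime (d36 m) (d48 m) :=
  mk_coprime m (by norm_num) (hdvd36 m hm3) (hdvd48 m hm3) (K48 m hm3)

lemma cop_36_72 (m : ℤ) (hm3 : 3 ≤ m) : Nat.Coprime (d36 m) (d72 m) :=
  mk_coprime m (by norm_num) (hdvd36 m hm3) (hdvd72 m hm3) (K72 m hm3)

lemma cop_48_72 (m : ℤ) (hm3 : 3 ≤ m) : Nat.Coprime (d48 m) (d72 m) :=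
  mk_coprime m (by norm_num) (hdvd48 m hm3) (hdvd72 m hm3) (K72 m hm3)

end Stmt15

open Stmt15 in
theorem stmt_15 (m : ℤ) (hm : 1 < m) :
    {k : ℕ | 0 < k ∧ ∀ n : ℕ, 1 ≤ n →
      1 < (k : ℤ) * (m - 1) * m ^ n + 1 ∧
        ¬ Prime ((k : ℤ) * (m - 1) * m ^ n + 1)}.Infinite := by
  rcases eq_or_lt_of_le (by omega : (2 : ℤ) ≤ m) with h2 | h3
  · -- m = 2
    subst h2
    apply core 2 (by norm_num) 36
      [(3, 2, 0), (7, 3, 1), (5, 4, 3), (73, 9, 5), (13, 12, 9), (19, 18, 17), (37, 36, 29)]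
    · intro x hx; fin_cases hx <;> norm_num
    · intro x hx; fin_cases hx <;> norm_num
    · intro x hx; fin_cases hx <;> norm_num
    · intro x hx; fin_cases hx <;> norm_num
    · intro x hx
      have h1 : (2 : ℤ) - 1 = 1 := by norm_num
      rw [h1]
      exact isCoprime_one_right
    · decide
    · norm_num
    · decide
  · -- 3 ≤ m
    have hm3 : (3 : ℤ) ≤ m := h3
    apply core m hm 144
      [(d3 m, 3, 0), (d4 m, 4, 1), (d6 m, 6, 2), (d8 m, 8, 4), (d9 m, 9, 7), (d12 m, 12, 11), (d16 m, 16, 3), (d18 m, 18, 10), (d24 m, 24, 7), (d36 m, 36, 22), (d48 m, 48, 43), (d72 m, 72, 40)]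
    · intro x hx
      simp only [List.mem_cons, List.not_mem_nil, or_false] at hx
      rcases hx with rfl|rfl|rfl|rfl|rfl|rfl|rfl|rfl|rfl|rfl|rfl|rfl
      exacts [(spec3 m hm3).1, (spec4 m hm3).1, (spec6 m hm3).1, (spec8 m hm3).1, (spec9 m hm3).1, (spec12 m hm3).1, (spec16 m hm3).1, (spec18 m hm3).1, (spec24 m hm3).1, (spec36 m hm3).1, (spec48 m hm3).1, (spec72 m hm3).1]
    · intro x hx
      simp only [List.mem_cons, List.not_mem_nil, or_false] at hx
      rcases hx with rfl|rfl|rfl|rfl|rfl|rfl|rfl|rfl|rfl|rfl|rfl|rfl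
      all_goals norm_num
    · intro x hx
      simp only [List.mem_cons, List.not_mem_nil, or_false] at hx
      rcases hx with rfl|rfl|rfl|rfl|rfl|rfl|rfl|rfl|rfl|rfl|rfl|rfl
      all_goals norm_num
    · intro x hx
      simp only [List.mem_cons, List.not_mem_nil, or_false] at hx
      rcases hx with rfl|rfl|rfl|rfl|rfl|rfl|rfl|rfl|rfl|rfl|rfl|rfl
      exacts [hdvd3 m hm3, hdvd4 m hm3, hdvd6 m hm3, hdvd8 m hm3, hdvd9 m hm3, hdvd12 m hm3, hdvd16 m hm3, hdvd18 m hm3, hdvd24 m hm3, hdvd36 m hm3, hdvd48 m hm3, hdvd72 m hm3]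
    · intro x hx
      simp only [List.mem_cons, List.not_mem_nil, or_false] at hx
      rcases hx with rfl|rfl|rfl|rfl|rfl|rfl|rfl|rfl|rfl|rfl|rfl|rfl
      exacts [isCoprime_m1 m (d3 m) 3 (by norm_num) (K3 m hm3), isCoprime_m1 m (d4 m) 4 (by norm_num) (K4 m hm3), isCoprime_m1 m (d6 m) 6 (by norm_num) (K6 m hm3), isCoprime_m1 m (d8 m) 8 (by norm_num) (K8 m hm3), isCoprime_m1 m (d9 m) 9 (by norm_num) (K9 m hm3), isCoprime_m1 m (d12 m) 12 (by norm_num) (K12 m hm3), isCoprime_m1 m (d16 m) 16 (by norm_num) (K16 m hm3), isCoprime_m1 m (d18 m) 18 (by norm_num) (K18 m hm3), isCoprime_m1 m (d24 m) 24 (by norm_num) (K24 m hm3), isCoprime_m1 m (d36 m) 36 (by norm_num) (K36 m hm3), isCoprime_m1 m (d48 m) 48 (by norm_num) (K48 m hm3), isCoprime_m1 m (d72 m) 72 (by norm_num) (K72 m hm3)]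
    · refine List.Pairwise.cons ?_ (List.Pairwise.cons ?_ (List.Pairwise.cons ?_ (List.Pairwise.cons ?_ (List.Pairwise.cons ?_ (List.Pairwise.cons ?_ (List.Pairwise.cons ?_ (List.Pairwise.cons ?_ (List.Pairwise.cons ?_ (List.Pairwise.cons ?_ (List.Pairwise.cons ?_ (List.Pairwise.cons ?_ List.Pairwise.nil)))))))))))
      · intro y hy
        simp only [List.mem_cons, List.not_mem_nil, or_false] at hy
        rcases hy with rfl|rfl|rfl|rfl|rfl|rfl|rfl|rfl|rfl|rfl|rfl
        exacts [cop_3_4 m hm3, cop_3_6 m hm3, cop_3_8 m hm3, cop_3_9 m hm3, cop_3_12 m hm3, cop_3_16 m hm3, cop_3_18 m hm3, cop_3_24 m hm3, cop_3_36 m hm3, cop_3_48 m hm3, cop_3_72 m hm3]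
      · intro y hy
        simp only [List.mem_cons, List.not_mem_nil, or_false] at hy
        rcases hy with rfl|rfl|rfl|rfl|rfl|rfl|rfl|rfl|rfl|rfl
        exacts [cop_4_6 m hm3, cop_4_8 m hm3, cop_4_9 m hm3, cop_4_12 m hm3, cop_4_16 m hm3, cop_4_18 m hm3, cop_4_24 m hm3, cop_4_36 m hm3, cop_4_48 m hm3, cop_4_72 m hm3]
      · intro y hy
        simp only [List.mem_cons, List.not_mem_nil, or_false] at hy
        rcases hy with rfl|rfl|rfl|rfl|rfl|rfl|rfl|rfl|rfl
        exacts [cop_6_8 m hm3, cop_6_9 m hm3, cop_6_12 m hm3, cop_6_16 m hm3, cop_6_18 m hm3, cop_6_24 m hm3, cop_6_36 m hm3, cop_6_48 m hm3, cop_6_72 m hm3]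
      · intro y hy
        simp only [List.mem_cons, List.not_mem_nil, or_false] at hy
        rcases hy with rfl|rfl|rfl|rfl|rfl|rfl|rfl|rfl
        exacts [cop_8_9 m hm3, cop_8_12 m hm3, cop_8_16 m hm3, cop_8_18 m hm3, cop_8_24 m hm3, cop_8_36 m hm3, cop_8_48 m hm3, cop_8_72 m hm3]
      · intro y hy
        simp only [List.mem_cons, List.not_mem_nil, or_false] at hy
        rcases hy with rfl|rfl|rfl|rfl|rfl|rfl|rfl
        exacts [cop_9_12 m hm3, cop_9_16 m hm3, cop_9_18 m hm3, cop_9_24 m hm3, cop_9_36 m hm3, cop_9_48 m hm3, cop_9_72 m hm3]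
      · intro y hy
        simp only [List.mem_cons, List.not_mem_nil, or_false] at hy
        rcases hy with rfl|rfl|rfl|rfl|rfl|rfl
        exacts [cop_12_16 m hm3, cop_12_18 m hm3, cop_12_24 m hm3, cop_12_36 m hm3, cop_12_48 m hm3, cop_12_72 m hm3]
      · intro y hy
        simp only [List.mem_cons, List.not_mem_nil, or_false] at hy
        rcases hy with rfl|rfl|rfl|rfl|rfl
        exacts [cop_16_18 m hm3, cop_16_24 m hm3, cop_16_36 m hm3, cop_16_48 m hm3, cop_16_72 m hm3]
      · intro y hy
        simp only [List.mem_cons, List.not_mem_nil, or_false] at hy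
        rcases hy with rfl|rfl|rfl|rfl
        exacts [cop_18_24 m hm3, cop_18_36 m hm3, cop_18_48 m hm3, cop_18_72 m hm3]
      · intro y hy
        simp only [List.mem_cons, List.not_mem_nil, or_false] at hy
        rcases hy with rfl|rfl|rfl
        exacts [cop_24_36 m hm3, cop_24_48 m hm3, cop_24_72 m hm3]
      · intro y hy
        simp only [List.mem_cons, List.not_mem_nil, or_false] at hy
        rcases hy with rfl|rfl
        exacts [cop_36_48 m hm3, cop_36_72 m hm3]
      · intro y hy
        simp only [List.mem_cons, List.not_mem_nil, or_false] at hy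
        rcases hy with rfl
        exacts [cop_48_72 m hm3]
      · intro y hy
        exact absurd hy List.not_mem_nil
    · norm_num
    · intro r hr
      have hcov : r % 3 = 0 ∨ r % 4 = 1 ∨ r % 6 = 2 ∨ r % 8 = 4 ∨ r % 9 = 7 ∨ r % 12 = 11 ∨ r % 16 = 3 ∨ r % 18 = 10 ∨ r % 24 = 7 ∨ r % 36 = 22 ∨ r % 48 = 43 ∨ r % 72 = 40 := by
        have hdec : ∀ r' : ℕ, r' < 144 → (r' % 3 = 0 ∨ r' % 4 = 1 ∨ r' % 6 = 2 ∨ r' % 8 = 4 ∨ r' % 9 = 7 ∨ r' % 12 = 11 ∨ r' % 16 = 3 ∨ r' % 18 = 10 ∨ r' % 24 = 7 ∨ r' % 36 = 22 ∨ r' % 48 = 43 ∨ r' % 72 = 40) := by decide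
        exact hdec r hr
      rcases hcov with h|h|h|h|h|h|h|h|h|h|h|h
      · exact ⟨(d3 m, 3, 0), by simp, h⟩
      · exact ⟨(d4 m, 4, 1), by simp, h⟩
      · exact ⟨(d6 m, 6, 2), by simp, h⟩
      · exact ⟨(d8 m, 8, 4), by simp, h⟩
      · exact ⟨(d9 m, 9, 7), by simp, h⟩
      · exact ⟨(d12 m, 12, 11), by simp, h⟩
      · exact ⟨(d16 m, 16, 3), by simp, h⟩
      · exact ⟨(d18 m, 18, 10), by simp, h⟩
      · exact ⟨(d24 m, 24, 7), by simp, h⟩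
      · exact ⟨(d36 m, 36, 22), by simp, h⟩
      · exact ⟨(d48 m, 48, 43), by simp, h⟩
      · exact ⟨(d72 m, 72, 40), by simp, h⟩
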